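/- Let α₁, ..., αₙ ∈ ℝ with reductive rank 𝓡̃(α₁, ..., αₙ) = m − 1 and rank 𝓡(α₁, ..., αₙ) = m. Then there exist G ∈ GL_n(ℤ), real numbers γ₁, ..., γ_{m−1} that are rationally independent irrational numbers (i.e., 1, γ₁, ..., γ_{m−1} are ℚ-linearly independent), integers k, d with gcd(d, k) = 1, and integers N₁, ..., Nₙ such that G·(α₁, ..., αₙ)ᵀ ≡ (γ₁, ..., γ_{m−1}, k/d, 0, ..., 0)ᵀ (mod ℤⁿ). -/

import Mathlib

open Module Submodule

lemma exists_basis_ann {R M : Type*} [CommRing R] [IsDomain R] [IsPrincipalIdealRing R]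
    [AddCommGroup M] [Module R M] {r : ℕ}
    (b : Basis (Fin r) R M) (hr : 0 < r) (χ : M →ₗ[R] R) :
    ∃ w : Basis (Fin r) R M, ∀ j : Fin r, j ≠ ⟨0, hr⟩ → χ (w j) = 0 := by
  by_cases hχ : χ = 0
  · exact ⟨b, fun j _ => by simp [hχ]⟩
  · set g : R := Submodule.IsPrincipal.generator (LinearMap.range χ) with hgdef
    obtain ⟨w₀, hw₀⟩ : g ∈ LinearMap.range χ := Submodule.IsPrincipal.generator_mem _
    have hgne : g ≠ 0 := by
      intro h
      exact hχ (LinearMap.range_eq_bot.mp (by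
        rw [← Submodule.IsPrincipal.span_singleton_generator (LinearMap.range χ), ← hgdef, h,
          Submodule.span_zero_singleton]))
    obtain ⟨s, bk⟩ := (LinearMap.ker χ).basisOfPid b
    set v : Fin (s + 1) → M := Fin.cons w₀ (fun i => (bk i : M)) with hv
    have hvsucc : ∀ i : Fin s, χ (v i.succ) = 0 := by
      intro i
      simp only [hv, Fin.cons_succ]
      exact (bk i).2
    have hspan_le : span R (Set.range ((LinearMap.ker χ).subtype ∘ bk)) ≤ LinearMap.ker χ := by
      rw [Submodule.span_le]
      rintro x ⟨i, rfl⟩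
      exact (bk i).2
    have hli : LinearIndependent R v := by
      apply LinearIndependent.fin_cons' w₀ _
        (bk.linearIndependent.map' (LinearMap.ker χ).subtype (Submodule.ker_subtype _))
      intro c y hys hy
      have hchi : χ (c • w₀ + (y : M)) = 0 := by rw [hy, map_zero]
      rw [map_add, map_smul, hw₀] at hchi
      have hy0 : χ (y : M) = 0 := hspan_le hys
      rw [hy0, add_zero, smul_eq_mul] at hchi
      exact (mul_eq_zero.mp hchi).resolve_right hgne
    have hkerle : LinearMap.ker χ ≤ span R (Set.range v) := by
      intro y hy
      have hrepr := bk.sum_repr ⟨y, hy⟩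
      have h2 := congrArg (Submodule.subtype (LinearMap.ker χ)) hrepr
      rw [map_sum] at h2
      simp only [map_smul, Submodule.subtype_apply] at h2
      rw [← h2]
      apply Submodule.sum_mem
      intro i _
      exact Submodule.smul_mem _ _ (Submodule.subset_span ⟨i.succ, by simp [hv]⟩)
    have hsp : ⊤ ≤ span R (Set.range v) := by
      intro x _
      have hxg : χ x ∈ Submodule.span R {g} := by
        rw [Submodule.IsPrincipal.span_singleton_generator (LinearMap.range χ)]
        exact LinearMap.mem_range_self _ x
      obtain ⟨cc, hcc⟩ := Submodule.mem_span_singleton.mp hxg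
      have hker : x - cc • w₀ ∈ LinearMap.ker χ := by
        rw [LinearMap.mem_ker, map_sub, map_smul, hw₀, sub_eq_zero, ← hcc]
      have h1 : x - cc • w₀ ∈ span R (Set.range v) := hkerle hker
      have h0 : w₀ ∈ span R (Set.range v) :=
        Submodule.subset_span ⟨0, by simp [hv]⟩
      have hfin := Submodule.add_mem _ h1 (Submodule.smul_mem _ cc h0)
      rwa [sub_add_cancel] at hfin
    set w' : Basis (Fin (s + 1)) R M := Basis.mk hli hsp with hw'
    have hcard : s + 1 = r := by
      have h1 := Module.finrank_eq_card_basis w'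
      have h2 := Module.finrank_eq_card_basis b
      simp only [Fintype.card_fin] at h1 h2
      omega
    refine ⟨w'.reindex (finCongr hcard), fun j hj => ?_⟩
    rw [Basis.reindex_apply]
    have hj'0 : (finCongr hcard).symm j ≠ 0 := by
      intro h
      apply hj
      apply Fin.ext
      simpa using congrArg Fin.val h
    obtain ⟨i, hi⟩ := Fin.eq_succ_of_ne_zero hj'0
    rw [hi, hw', Basis.mk_apply]
    exact hvsucc i

lemma den_clear {ι : Type*} [Fintype ι] (q : ι → ℚ) :
    ∃ (D : ℤ) (c : ι → ℤ), D ≠ 0 ∧ ∀ i, (c i : ℚ) = D * q i := by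
  classical
  have hden : ∀ i, ((q i).den : ℤ) ≠ 0 := fun i => by
    exact_mod_cast (q i).den_nz
  refine ⟨∏ j, ((q j).den : ℤ),
    fun i => (∏ j, ((q j).den : ℤ)) / ((q i).den : ℤ) * (q i).num, ?_, ?_⟩
  · exact Finset.prod_ne_zero_iff.mpr fun i _ => hden i
  · intro i
    obtain ⟨c, hc⟩ : ((q i).den : ℤ) ∣ ∏ j, ((q j).den : ℤ) :=
      Finset.dvd_prod_of_mem _ (Finset.mem_univ i)
    simp only [hc, Int.mul_ediv_cancel_left _ (hden i)]
    push_cast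
    rw [mul_comm (((q i).den : ℚ)) (c : ℚ), mul_assoc, Rat.den_mul_eq_num]

/-- If `α₁, …, αₙ` have rank `m` and reductive rank `m - 1`, then some unimodular integer
matrix transforms them, mod `ℤⁿ`, into `(γ₁, …, γ_{m-1}, k/d, 0, …, 0)` where
`1, γ₁, …, γ_{m-1}` are `ℚ`-linearly independent and `gcd (d, k) = 1`. -/
theorem unimodular_normal_form_of_reductive_rank
    (n m : ℕ) (α : Fin n → ℝ)
    (hrank : Module.finrank ℚ ↥(Submodule.span ℚ (Set.range α)) = m)
    (hred : Module.finrank ℚ ↥(Submodule.span ℚ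
        ((Submodule.span ℚ ({1} : Set ℝ)).mkQ '' Set.range α)) = m - 1) :
    ∃ G : Matrix (Fin n) (Fin n) ℤ, IsUnit G.det ∧
    ∃ γ : Fin (m - 1) → ℝ,
      LinearIndependent ℚ (Fin.cons (1 : ℝ) γ : Fin (m - 1 + 1) → ℝ) ∧
    ∃ k d : ℤ, Int.gcd d k = 1 ∧
    ∃ N : Fin n → ℤ,
      ∀ i : Fin n, (G.map (Int.cast : ℤ → ℝ)).mulVec α i
        = (if h : (i : ℕ) < m - 1 then γ ⟨i, h⟩
           else if (i : ℕ) = m - 1 then (k : ℝ) / (d : ℝ) else 0) + N i := by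
  classical
  rcases Nat.eq_zero_or_pos m with hm0 | hm
  · -- degenerate case : all α i = 0
    subst hm0
    have hα : ∀ i, α i = 0 := by
      have hfin : FiniteDimensional ℚ ↥(span ℚ (Set.range α)) :=
        FiniteDimensional.span_of_finite ℚ (Set.finite_range α)
      have hbot : span ℚ (Set.range α) = ⊥ := Submodule.finrank_eq_zero.mp hrank
      intro i
      have hmem : α i ∈ span ℚ (Set.range α) := Submodule.subset_span ⟨i, rfl⟩
      rw [hbot] at hmem
      simpa using hmem
    refine ⟨1, by simp, fun _ => 0, ?_, 0, 1, by simp, 0, ?_⟩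
    · haveI : Unique (Fin (0 - 1 + 1)) := inferInstanceAs (Unique (Fin 1))
      apply LinearIndependent.of_subsingleton default
      intro h
      have h2 : (Fin.cons (1 : ℝ) (fun _ => (0 : ℝ)) : Fin (0 - 1 + 1) → ℝ) 0 = 0 := by
        rw [Subsingleton.elim (0 : Fin (0 - 1 + 1)) default]
        convert h using 2
      rw [Fin.cons_zero] at h2
      exact one_ne_zero h2
    · intro i
      rw [Matrix.map_one _ Int.cast_zero Int.cast_one, Matrix.one_mulVec]
      simp [hα i]
  · -- main case
    have hmn : m ≤ n := by
      rw [← hrank]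
      refine (finrank_span_le_card (R := ℚ) (Set.range α)).trans ?_
      rw [Set.toFinset_range]
      exact (Finset.card_image_le).trans (by simp)
    -- the linear map φ
    set φ : (Fin n → ℤ) →ₗ[ℤ] ℝ :=
      ∑ i : Fin n, LinearMap.smulRight (LinearMap.proj i) (α i) with hφdef
    have hφ : ∀ c : Fin n → ℤ, φ c = ∑ i, (c i : ℝ) * α i := by
      intro c
      rw [hφdef]
      simp [LinearMap.smulRight_apply, zsmul_eq_mul]
    -- the submodule L of integer vectors with rational φ-value
    set QS : Submodule ℤ ℝ :=
      LinearMap.range ((Algebra.linearMap ℚ ℝ).restrictScalars ℤ) with hQSdef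
    set L : Submodule ℤ (Fin n → ℤ) := Submodule.comap φ QS with hLdef
    have halg : ∀ q : ℚ, ((Algebra.linearMap ℚ ℝ).restrictScalars ℤ) q = (q : ℝ) := by
      intro q
      rw [LinearMap.restrictScalars_apply, Algebra.linearMap_apply]
      exact eq_ratCast _ q
    have hLmem : ∀ c : Fin n → ℤ, c ∈ L ↔ ∃ q : ℚ, (q : ℝ) = φ c := by
      intro c
      rw [hLdef, Submodule.mem_comap, hQSdef, LinearMap.mem_range]
      constructor
      · rintro ⟨q, hq⟩
        exact ⟨q, by rw [← halg]; exact hq⟩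
      · rintro ⟨q, hq⟩
        exact ⟨q, by rw [halg]; exact hq⟩
    -- the rational value map ψ on L
    have hinj : Function.Injective ((Algebra.linearMap ℚ ℝ).restrictScalars ℤ) := by
      intro a b hab
      rw [halg, halg] at hab
      exact_mod_cast hab
    set eQ : ℚ ≃ₗ[ℤ] QS := LinearEquiv.ofInjective _ hinj with heQdef
    set φL : ↥L →ₗ[ℤ] ↥QS :=
      LinearMap.codRestrict QS (φ.comp L.subtype) (fun x => x.2) with hφLdef
    set ψ : ↥L →ₗ[ℤ] ℚ := eQ.symm.toLinearMap.comp φL with hψdef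
    have hψ : ∀ x : ↥L, ((ψ x : ℚ) : ℝ) = φ (x : Fin n → ℤ) := by
      intro x
      have h3 : eQ (ψ x) = φL x := by
        rw [hψdef]
        simp only [LinearMap.comp_apply, LinearEquiv.coe_coe]
        exact eQ.apply_symm_apply (φL x)
      have h2 := congrArg (Subtype.val) h3
      rw [heQdef, LinearEquiv.ofInjective_apply, halg] at h2
      rw [h2, hφLdef]
      rfl
    -- Smith normal form
    obtain ⟨r, snf⟩ := L.smithNormalForm (Pi.basisFun ℤ (Fin n))
    have hfL : ∀ i : Fin r, snf.bM (snf.f i) ∈ L := by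
      intro i
      have hai : snf.a i ≠ 0 := by
        intro h0
        have hsnf := snf.snf i
        rw [h0, zero_smul] at hsnf
        exact (Basis.ne_zero snf.bN i) (Subtype.ext hsnf)
      have hmem := (snf.bN i).2
      rw [hLmem] at hmem
      obtain ⟨q, hq⟩ := hmem
      rw [snf.snf i, map_smul, zsmul_eq_mul] at hq
      apply (hLmem _).mpr
      refine ⟨q / (snf.a i : ℚ), ?_⟩
      have hai' : ((snf.a i : ℚ) : ℝ) ≠ 0 := by exact_mod_cast hai
      rw [Rat.cast_div, div_eq_iff hai', hq]
      push_cast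
      ring
    -- the quotient map and the independence of the complementary part
    set π : ℝ →ₗ[ℚ] (ℝ ⧸ span ℚ ({1} : Set ℝ)) := (span ℚ ({1} : Set ℝ)).mkQ with hπdef
    set g : {j : Fin n // j ∉ Set.range snf.f} → (ℝ ⧸ span ℚ ({1} : Set ℝ)) :=
      fun j => π (φ (snf.bM ↑j)) with hgdef
    have hπL : ∀ c ∈ L, π (φ c) = 0 := by
      intro c hc
      obtain ⟨q, hq⟩ := (hLmem c).mp hc
      rw [hπdef, Submodule.mkQ_apply, Submodule.Quotient.mk_eq_zero]
      refine Submodule.mem_span_singleton.mpr ⟨q, ?_⟩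
      rw [Rat.smul_def, mul_one]
      exact hq
    have hπL' : ∀ c : Fin n → ℤ, π (φ c) = 0 → c ∈ L := by
      intro c hc
      rw [hπdef, Submodule.mkQ_apply, Submodule.Quotient.mk_eq_zero] at hc
      obtain ⟨q, hq⟩ := Submodule.mem_span_singleton.mp hc
      rw [Rat.smul_def, mul_one] at hq
      exact (hLmem c).mpr ⟨q, hq⟩
    have hreprc : ∀ (c : {j : Fin n // j ∉ Set.range snf.f} → ℤ)
        (j0 : {j : Fin n // j ∉ Set.range snf.f}),
        snf.bM.repr (∑ j, c j • (snf.bM ↑j : Fin n → ℤ)) ↑j0 = c j0 := by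
      intro c j0
      rw [map_sum, Finsupp.finset_sum_apply]
      rw [Finset.sum_eq_single j0]
      · rw [map_smul, Finsupp.smul_apply, Basis.repr_self, Finsupp.single_eq_same, smul_eq_mul,
          mul_one]
      · intro b _ hb
        have hbb : (↑b : Fin n) ≠ ↑j0 := fun h => hb (Subtype.ext h)
        rw [map_smul, Finsupp.smul_apply, Basis.repr_self, Finsupp.single_apply, if_neg hbb,
          smul_zero]
      · intro h
        exact absurd (Finset.mem_univ _) h
    have hgindep : LinearIndependent ℚ g := by
      rw [Fintype.linearIndependent_iff]
      intro q hq
      obtain ⟨Dq, c, hDq, hc⟩ := den_clear q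
      have h1 : ∑ j, (c j : ℚ) • g j = 0 := by
        have h0 : ∑ j, (c j : ℚ) • g j = (Dq : ℚ) • ∑ j, q j • g j := by
          rw [Finset.smul_sum]
          apply Finset.sum_congr rfl
          intro j _
          rw [hc j, mul_smul]
        rw [h0, hq, smul_zero]
      have h2 : ∑ j, (c j : ℚ) • g j = π (φ (∑ j, c j • (snf.bM ↑j : Fin n → ℤ))) := by
        rw [map_sum, map_sum]
        apply Finset.sum_congr rfl
        intro j _
        rw [map_zsmul, map_zsmul, Int.cast_smul_eq_zsmul ℚ, hgdef]
      have hy : π (φ (∑ j, c j • (snf.bM ↑j : Fin n → ℤ))) = 0 := by rw [← h2, h1]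
      have hyL := hπL' _ hy
      intro j
      have h3 : snf.bM.repr (∑ j, c j • (snf.bM ↑j : Fin n → ℤ)) ↑j = 0 :=
        snf.repr_eq_zero_of_notMem_range ⟨_, hyL⟩ j.2
      have hcj : c j = 0 := by rw [← hreprc c j]; exact h3
      have hq0 : (Dq : ℚ) * q j = 0 := by rw [← hc j, hcj, Int.cast_zero]
      rcases mul_eq_zero.mp hq0 with h | h
      · exact absurd (by exact_mod_cast h) hDq
      · exact h
    have hπφ : ∀ x : Fin n → ℤ, π (φ x) = ∑ i, x i • π (α i) := by
      intro x
      rw [hφ, map_sum]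
      apply Finset.sum_congr rfl
      intro i _
      rw [← zsmul_eq_mul, map_zsmul]
    have hgspan : span ℚ (Set.range g) = span ℚ (π '' Set.range α) := by
      apply le_antisymm
      · rw [Submodule.span_le]
        rintro x ⟨j, rfl⟩
        rw [hgdef]
        simp only []
        rw [hπφ]
        apply Submodule.sum_mem
        intro i _
        rw [← Int.cast_smul_eq_zsmul ℚ]
        exact Submodule.smul_mem _ _ (Submodule.subset_span ⟨α i, ⟨i, rfl⟩, rfl⟩)
      · rw [Submodule.span_le]
        rintro x ⟨-, ⟨i, rfl⟩, rfl⟩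
        have hsingle : φ (Pi.single i (1 : ℤ)) = α i := by
          rw [hφ]
          rw [Finset.sum_eq_single i] <;> simp +contextual [Pi.single_apply]
        have hdec := Basis.sum_repr snf.bM (Pi.single i (1 : ℤ))
        have hexp : π (φ (Pi.single i (1 : ℤ)))
            = ∑ j, (snf.bM.repr (Pi.single i (1 : ℤ)) j) • π (φ (snf.bM j)) := by
          conv_lhs => rw [← hdec]
          rw [map_sum, map_sum]
          apply Finset.sum_congr rfl
          intro j _
          rw [map_zsmul, map_zsmul]
        rw [← hsingle, hexp]
        apply Submodule.sum_mem
        intro j _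
        by_cases hj : j ∈ Set.range snf.f
        · obtain ⟨t, rfl⟩ := hj
          rw [hπL _ (hfL t), smul_zero]
          exact Submodule.zero_mem _
        · rw [← Int.cast_smul_eq_zsmul ℚ]
          refine Submodule.smul_mem _ _ (Submodule.subset_span ⟨⟨j, hj⟩, ?_⟩)
          rw [hgdef]
    have hcardc : Fintype.card {j : Fin n // j ∉ Set.range snf.f} = m - 1 := by
      have hfr := finrank_span_eq_card hgindep
      rw [hgspan, hred] at hfr
      exact hfr.symm
    have hrn : r ≤ n := by
      have := Fintype.card_le_of_embedding snf.f
      simpa using this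
    have hcompl : Fintype.card {j : Fin n // j ∉ Set.range snf.f} = n - r := by
      have h1 : Fintype.card {j : Fin n // j ∈ Set.range snf.f} = r := by
        rw [Fintype.card_congr (Equiv.ofInjective snf.f snf.f.injective).symm, Fintype.card_fin]
      have h2 := Fintype.card_subtype_compl (fun j : Fin n => j ∈ Set.range snf.f)
      rw [h1, Fintype.card_fin] at h2
      exact h2
    have hsum : (m - 1) + r = n := by omega
    have hr : 0 < r := by omega
    -- adapted basis of L
    obtain ⟨D, cD, hD, hcD⟩ := den_clear (fun i : Fin r => ψ (snf.bN i))
    set χ : ↥L →ₗ[ℤ] ℤ := snf.bN.constr ℤ cD with hχdef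
    have hχψ : ∀ x : ↥L, ((χ x : ℤ) : ℚ) = (D : ℚ) * ψ x := by
      have hmaps : (Int.castAddHom ℚ).toIntLinearMap.comp χ = (D : ℚ) • ψ := by
        apply Basis.ext snf.bN
        intro i
        simp only [LinearMap.comp_apply, AddMonoidHom.coe_toIntLinearMap, Int.coe_castAddHom,
          LinearMap.smul_apply, hχdef, Basis.constr_basis, smul_eq_mul]
        exact hcD i
      intro x
      have h1 := LinearMap.congr_fun hmaps x
      simpa [smul_eq_mul] using h1
    obtain ⟨w, hw⟩ := exists_basis_ann snf.bN hr χ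
    have hψw : ∀ j : Fin r, j ≠ ⟨0, hr⟩ → ψ (w j) = 0 := by
      intro j hj
      have h1 := hχψ (w j)
      rw [hw j hj] at h1
      have h2 : (D : ℚ) * ψ (w j) = 0 := by exact_mod_cast h1.symm
      rcases mul_eq_zero.mp h2 with h | h
      · exact absurd (by exact_mod_cast h) hD
      · exact h
    have hφw : ∀ j : Fin r, j ≠ ⟨0, hr⟩ → φ ((w j : Fin n → ℤ)) = 0 := by
      intro j hj
      rw [← hψ (w j), hψw j hj]
      simp
    set q₀ : ℚ := ψ (w ⟨0, hr⟩) with hq₀def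
    have hφw0 : φ ((w ⟨0, hr⟩ : Fin n → ℤ)) = (q₀.num : ℝ) / ((q₀.den : ℤ) : ℝ) := by
      rw [← hψ (w ⟨0, hr⟩), ← hq₀def, Rat.cast_def]
      push_cast
      rfl
    -- assemble the new basis of ℤⁿ
    set eC : {j : Fin n // j ∉ Set.range snf.f} ≃ Fin (m - 1) :=
      Fintype.equivFinOfCardEq hcardc with heCdef
    set E : ({j : Fin n // j ∉ Set.range snf.f} ⊕ Fin r) ≃ Fin n :=
      (Equiv.sumCongr eC (Equiv.refl (Fin r))).trans (finSumFinEquiv.trans (finCongr hsum))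
      with hEdef
    set v : ({j : Fin n // j ∉ Set.range snf.f} ⊕ Fin r) → (Fin n → ℤ) :=
      Sum.elim (fun j => snf.bM ↑j) (fun i => (w i : Fin n → ℤ)) with hvdef
    have hvli : LinearIndependent ℤ v := by
      rw [Fintype.linearIndependent_iff]
      intro c hc
      rw [Fintype.sum_sum_type] at hc
      simp only [hvdef, Sum.elim_inl, Sum.elim_inr] at hc
      set z : ↥L := ∑ i : Fin r, c (Sum.inr i) • w i with hzdef
      have hzc : (z : Fin n → ℤ) = ∑ i : Fin r, c (Sum.inr i) • (w i : Fin n → ℤ) := by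
        rw [hzdef]
        push_cast
        rfl
      rw [← hzc] at hc
      have hcl : ∀ j0 : {j : Fin n // j ∉ Set.range snf.f}, c (Sum.inl j0) = 0 := by
        intro j0
        have h4 : snf.bM.repr (∑ j, c (Sum.inl j) • (snf.bM ↑j : Fin n → ℤ)) ↑j0
            + snf.bM.repr (z : Fin n → ℤ) ↑j0 = 0 := by
          have h5 := congrArg (fun t => snf.bM.repr t ↑j0) hc
          simpa [map_add] using h5
        rw [hreprc (fun j => c (Sum.inl j)) j0, snf.repr_eq_zero_of_notMem_range z j0.2,
          add_zero] at h4
        exact h4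
      have hsum0 : ∑ j, c (Sum.inl j) • (snf.bM ↑j : Fin n → ℤ) = 0 := by
        apply Finset.sum_eq_zero
        intro j0 _
        rw [hcl j0, zero_smul]
      rw [hsum0, zero_add] at hc
      have hz0 : z = 0 := Subtype.ext (by rw [hc]; rfl)
      have hcr := Fintype.linearIndependent_iff.mp w.linearIndependent
        (fun i => c (Sum.inr i)) (by rw [← hzdef, hz0])
      intro x
      cases x with
      | inl j0 => exact hcl j0
      | inr i => exact hcr i
    have hvsp : ⊤ ≤ span ℤ (Set.range v) := by
      intro x _
      have hx := Basis.sum_repr snf.bM x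
      rw [← hx]
      apply Submodule.sum_mem
      intro j _
      apply Submodule.smul_mem
      by_cases hj : j ∈ Set.range snf.f
      · obtain ⟨t, rfl⟩ := hj
        have hWL : (⟨snf.bM (snf.f t), hfL t⟩ : ↥L) ∈ span ℤ (Set.range ⇑w) := by
          rw [w.span_eq]
          trivial
        have h2 := Submodule.mem_map_of_mem (f := L.subtype) hWL
        rw [Submodule.map_span] at h2
        refine Submodule.span_mono ?_ h2
        rintro y ⟨-, ⟨i, rfl⟩, rfl⟩
        exact ⟨Sum.inr i, by simp [hvdef]⟩
      · exact Submodule.subset_span ⟨Sum.inl ⟨j, hj⟩, by simp [hvdef]⟩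
    set B : Basis ({j : Fin n // j ∉ Set.range snf.f} ⊕ Fin r) ℤ (Fin n → ℤ) :=
      Basis.mk hvli hvsp with hBdef
    set vB : Basis (Fin n) ℤ (Fin n → ℤ) := B.reindex E with hvBdef
    set G : Matrix (Fin n) (Fin n) ℤ := Matrix.of (fun i j => vB i j) with hGdef
    have hGdet : IsUnit G.det := by
      have hGT : G = Matrix.transpose ((Pi.basisFun ℤ (Fin n)).toMatrix ⇑vB) := by
        apply Matrix.ext
        intro i j
        rw [Matrix.transpose_apply, Basis.toMatrix_apply, Pi.basisFun_repr, hGdef, Matrix.of_apply]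
      have hmul := Basis.toMatrix_mul_toMatrix_flip (Pi.basisFun ℤ (Fin n)) vB
      have hu : IsUnit ((Pi.basisFun ℤ (Fin n)).toMatrix ⇑vB).det :=
        Matrix.isUnit_det_of_right_inverse hmul
      rw [hGT, Matrix.det_transpose]
      exact hu
    set γ : Fin (m - 1) → ℝ := fun t => φ (snf.bM ↑(eC.symm t)) with hγdef
    have hγind : LinearIndependent ℚ (Fin.cons (1 : ℝ) γ : Fin (m - 1 + 1) → ℝ) := by
      have hcompi : LinearIndependent ℚ (⇑π ∘ γ) := by
        have h1 : ⇑π ∘ γ = g ∘ ⇑eC.symm := by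
          funext t
          simp only [Function.comp_apply, hγdef, hgdef]
        rw [h1]
        exact hgindep.comp ⇑eC.symm eC.symm.injective
      rw [linearIndependent_fin_cons]
      refine ⟨hcompi.of_comp π, ?_⟩
      intro hmem
      rw [mem_span_range_iff_exists_fun ℚ] at hmem
      obtain ⟨cq, hcq⟩ := hmem
      have h2 : ∑ t, cq t • (⇑π ∘ γ) t = 0 := by
        have h3 := congrArg π hcq
        rw [map_sum] at h3
        simp only [map_smul] at h3
        have hπ1 : π (1 : ℝ) = 0 := by
          rw [hπdef, Submodule.mkQ_apply, Submodule.Quotient.mk_eq_zero]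
          exact Submodule.mem_span_singleton_self 1
        rw [hπ1] at h3
        exact h3
      have hall := Fintype.linearIndependent_iff.mp hcompi cq h2
      rw [Finset.sum_eq_zero (fun t _ => by rw [hall t, zero_smul])] at hcq
      exact zero_ne_one hcq
    have hgcd : Int.gcd (q₀.den : ℤ) q₀.num = 1 := by
      have hq := q₀.reduced
      rw [Int.gcd]
      simp only [Int.natAbs_natCast]
      rw [Nat.gcd_comm]
      exact hq
    refine ⟨G, hGdet, γ, hγind, q₀.num, (q₀.den : ℤ), hgcd, 0, ?_⟩
    intro i
    have hmv : (G.map (Int.cast : ℤ → ℝ)).mulVec α i = φ (vB i) := by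
      simp [Matrix.mulVec, dotProduct, Matrix.map_apply, hGdef, hφ]
    rw [hmv]
    have hvB : vB i = v (E.symm i) := by
      rw [hvBdef, Basis.reindex_apply, hBdef, Basis.mk_apply]
    rw [hvB]
    simp only [Pi.zero_apply, Int.cast_zero, add_zero]
    have hE1 : ∀ t, ((E (Sum.inl t)) : ℕ) = ((eC t) : ℕ) := by
      intro t
      rw [hEdef]
      simp [finSumFinEquiv_apply_left]
    have hE2 : ∀ jj : Fin r, ((E (Sum.inr jj)) : ℕ) = (m - 1) + (jj : ℕ) := by
      intro jj
      rw [hEdef]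
      simp [finSumFinEquiv_apply_right]
    rcases hx : E.symm i with t | jj
    · have hi : i = E (Sum.inl t) := by rw [← hx, Equiv.apply_symm_apply]
      have hlt : (i : ℕ) < m - 1 := by
        rw [hi, hE1]
        exact (eC t).isLt
      rw [dif_pos hlt]
      have heq : eC.symm ⟨(i : ℕ), hlt⟩ = t := by
        have h5 : (⟨(i : ℕ), hlt⟩ : Fin (m - 1)) = eC t := by
          apply Fin.ext
          simp [hi, hE1]
        rw [h5, Equiv.symm_apply_apply]
      rw [hγdef]
      simp only [hvdef, Sum.elim_inl]
      rw [heq]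
    · have hi : i = E (Sum.inr jj) := by rw [← hx, Equiv.apply_symm_apply]
      have hval : (i : ℕ) = (m - 1) + (jj : ℕ) := by rw [hi, hE2]
      by_cases hj0 : jj = ⟨0, hr⟩
      · subst hj0
        have hival : (i : ℕ) = m - 1 := by simp [hval]
        rw [dif_neg (by omega), if_pos hival]
        simp only [hvdef, Sum.elim_inr]
        exact hφw0
      · have hjv : (jj : ℕ) ≠ 0 := fun h0 => hj0 (Fin.ext h0)
        rw [dif_neg (by omega), if_neg (by omega)]
        simp only [hvdef, Sum.elim_inr]
        exact hφw jj hj0
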